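/- Fix S ≥ 3 and T ≥ 4. The Smith normal form of the design matrix A of the THMC model without initial parameters and without self-loops is diag(1,…,1,T−1) of rank S(S−1); equivalently, the cokernel of the column lattice of A is cyclic of order T−1. -/

import Mathlib

/-- The number of transitions `p.1 → p.2` in the word `w` of length `T` over `[S]`. -/
def trCount (S T : ℕ) (w : Fin T → Fin S) (p : Fin S × Fin S) : ℕ :=
  (Finset.univ.filter (fun t : Fin (T - 1) =>
    w ⟨t.1, by have := t.2; omega⟩ = p.1 ∧ w ⟨t.1 + 1, by have := t.2; omega⟩ = p.2)).card

/-- A word has no self-loops (no two consecutive equal letters). -/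
def NoLoop (S T : ℕ) (w : Fin T → Fin S) : Prop :=
  ∀ t : Fin (T - 1), w ⟨t.1, by have := t.2; omega⟩ ≠ w ⟨t.1 + 1, by have := t.2; omega⟩

instance (S T : ℕ) : DecidablePred (NoLoop S T) := fun w => by
  unfold NoLoop; infer_instance

open Matrix LinearMap


theorem colEquiv {m N : ℕ} (B D : Matrix (Fin m) (Fin N) ℤ)
    (h : LinearMap.range B.mulVecLin = LinearMap.range D.mulVecLin) :
    ∃ V : Matrix (Fin N) (Fin N) ℤ, IsUnit V.det ∧ B * V = D := by
  classical
  set K : Submodule ℤ (Fin m → ℤ) := LinearMap.range D.mulVecLin with hK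
  have hBmem : ∀ x, B.mulVecLin x ∈ K := fun x => h ▸ LinearMap.mem_range_self _ x
  have hDmem : ∀ x, D.mulVecLin x ∈ K := fun x => LinearMap.mem_range_self _ x
  set fB : (Fin N → ℤ) →ₗ[ℤ] K := LinearMap.codRestrict K B.mulVecLin hBmem with hfB
  set fD : (Fin N → ℤ) →ₗ[ℤ] K := LinearMap.codRestrict K D.mulVecLin hDmem with hfD
  have hfBsurj : Function.Surjective fB := by
    rintro ⟨y, hy⟩
    rw [← h] at hy
    obtain ⟨x, hx⟩ := hy
    exact ⟨x, Subtype.ext hx⟩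
  have hfDsurj : Function.Surjective fD := by
    rintro ⟨y, hy⟩
    obtain ⟨x, hx⟩ := hy
    exact ⟨x, Subtype.ext hx⟩
  obtain ⟨sB, hsB⟩ := Module.projective_lifting_property fB (LinearMap.id (R := ℤ) (M := K)) hfBsurj
  obtain ⟨sD, hsD⟩ := Module.projective_lifting_property fD (LinearMap.id (R := ℤ) (M := K)) hfDsurj
  obtain ⟨γB, -, hγB'⟩ := (LinearMap.exact_subtype_ker_map fB).splitSurjectiveEquiv
    (Subtype.val_injective) ⟨sB, hsB⟩
  obtain ⟨γD, -, hγD'⟩ := (LinearMap.exact_subtype_ker_map fD).splitSurjectiveEquiv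
    (Subtype.val_injective) ⟨sD, hsD⟩
  have hγB : ∀ x, fB x = (γB x).2 := fun x => LinearMap.congr_fun hγB' x
  have hγD : ∀ x, fD x = (γD x).2 := fun x => LinearMap.congr_fun hγD' x
  -- equal ranks of kernels
  have hrk : Module.finrank ℤ (LinearMap.ker fD) = Module.finrank ℤ (LinearMap.ker fB) := by
    have h1 : Module.finrank ℤ (Fin N → ℤ)
        = Module.finrank ℤ (LinearMap.ker fB) + Module.finrank ℤ K := by
      rw [γB.finrank_eq, Module.finrank_prod]
    have h2 : Module.finrank ℤ (Fin N → ℤ)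
        = Module.finrank ℤ (LinearMap.ker fD) + Module.finrank ℤ K := by
      rw [γD.finrank_eq, Module.finrank_prod]
    omega
  -- bases of kernels
  obtain ⟨nB, bB⟩ := Submodule.basisOfPid (Pi.basisFun ℤ (Fin N)) (LinearMap.ker fB)
  obtain ⟨nD, bD⟩ := Submodule.basisOfPid (Pi.basisFun ℤ (Fin N)) (LinearMap.ker fD)
  have hnn : nD = nB := by
    have e1 := Module.finrank_eq_card_basis bB
    have e2 := Module.finrank_eq_card_basis bD
    simp only [Fintype.card_fin] at e1 e2
    omega
  set knEq : (LinearMap.ker fD) ≃ₗ[ℤ] (LinearMap.ker fB) := bD.equiv bB (finCongr hnn)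
  set v : (Fin N → ℤ) ≃ₗ[ℤ] (Fin N → ℤ) :=
    γD ≪≫ₗ (knEq.prodCongr (LinearEquiv.refl ℤ K)) ≪≫ₗ γB.symm with hv
  have hfv : ∀ x, fB (v x) = fD x := by
    intro x
    rw [hγB (v x), hγD x]
    have : γB (v x) = (knEq.prodCongr (LinearEquiv.refl ℤ K)) (γD x) := by
      simp [hv]
    rw [this]
    rfl
  have key : B.mulVecLin ∘ₗ (v : (Fin N → ℤ) →ₗ[ℤ] (Fin N → ℤ)) = D.mulVecLin := by
    have hBf : B.mulVecLin = (Submodule.subtype K) ∘ₗ fB := rfl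
    have hDf : D.mulVecLin = (Submodule.subtype K) ∘ₗ fD := rfl
    refine LinearMap.ext fun x => ?_
    rw [hBf, hDf]
    simp only [LinearMap.coe_comp, Function.comp_apply, LinearEquiv.coe_coe]
    rw [hfv x]
  refine ⟨LinearMap.toMatrix' (v : (Fin N → ℤ) →ₗ[ℤ] (Fin N → ℤ)), ?_, ?_⟩
  · apply Matrix.isUnit_det_of_right_inverse (B := LinearMap.toMatrix' (v.symm : (Fin N → ℤ) →ₗ[ℤ] (Fin N → ℤ)))
    rw [← LinearMap.toMatrix'_comp]
    simp
  · have : B * LinearMap.toMatrix' (v : (Fin N → ℤ) →ₗ[ℤ] (Fin N → ℤ))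
        = LinearMap.toMatrix' (B.mulVecLin ∘ₗ (v : (Fin N → ℤ) →ₗ[ℤ] (Fin N → ℤ))) := by
      rw [LinearMap.toMatrix'_comp]
      congr 1
      rw [← Matrix.toLin'_apply', LinearMap.toMatrix'_toLin']
    rw [this, key, ← Matrix.toLin'_apply', LinearMap.toMatrix'_toLin']


theorem card_pairs (S : ℕ) (hS : 1 ≤ S) :
    Fintype.card {p : Fin S × Fin S // p.1 ≠ p.2} = S * (S - 1) := by
  have h1 : Fintype.card {p : Fin S × Fin S // p.1 = p.2} = S := by
    have e : {p : Fin S × Fin S // p.1 = p.2} ≃ Fin S :=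
      { toFun := fun p => p.1.1
        invFun := fun x => ⟨(x, x), rfl⟩
        left_inv := fun p => by
          rcases p with ⟨⟨a, b⟩, h⟩
          simp only at h
          subst h
          rfl
        right_inv := fun x => rfl }
    rw [Fintype.card_congr e, Fintype.card_fin]
  have h2 := Fintype.card_subtype_compl (fun p : Fin S × Fin S => p.1 = p.2)
  have h3 : Fintype.card (Fin S × Fin S) = S * S := by simp
  have : Fintype.card {p : Fin S × Fin S // ¬p.1 = p.2} = S * S - S := by omega
  rw [this]
  cases S with
  | zero => omega
  | succ n => simp [Nat.succ_sub_one]; ring_nf; omega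

theorem card_words (S : ℕ) (hS : 1 ≤ S) :
    ∀ n : ℕ, Fintype.card {w : Fin (n + 1) → Fin S // NoLoop S (n + 1) w}
      = S * (S - 1) ^ n := by
  intro n
  induction n with
  | zero =>
    have e : {w : Fin 1 → Fin S // NoLoop S 1 w} ≃ (Fin 1 → Fin S) :=
      Equiv.subtypeUnivEquiv (fun w => fun t : Fin 0 => t.elim0)
    rw [Fintype.card_congr e]
    simp
  | succ n ih =>
    have e : {w : Fin (n + 2) → Fin S // NoLoop S (n + 2) w} ≃
        Σ w' : {w : Fin (n + 1) → Fin S // NoLoop S (n + 1) w},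
          {x : Fin S // x ≠ w'.1 ⟨n, Nat.lt_succ_self n⟩} :=
      { toFun := fun w =>
          ⟨⟨fun i => w.1 ⟨i.1, by omega⟩, fun t => w.2 ⟨t.1, by have := t.2; omega⟩⟩,
            ⟨w.1 ⟨n + 1, by omega⟩, by
              have := w.2 ⟨n, by omega⟩
              exact fun hc => this (by simpa using hc.symm)⟩⟩
        invFun := fun q =>
          ⟨fun i => if h : i.1 < n + 1 then q.1.1 ⟨i.1, h⟩ else q.2.1, by
            intro t
            by_cases ht : t.1 < n
            · have h1 : t.1 < n + 1 := by omega
              have h2 : t.1 + 1 < n + 1 := by omega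
              simp only [dif_pos h1, dif_pos h2]
              exact q.1.2 ⟨t.1, ht⟩
            · have ht' : t.1 = n := by have := t.2; omega
              have h1 : t.1 < n + 1 := by omega
              have h2 : ¬ (t.1 + 1 < n + 1) := by omega
              simp only [dif_pos h1, dif_neg h2]
              exact fun hc => q.2.2 (hc.symm.trans (congrArg q.1.1 (Fin.ext ht')))⟩
        left_inv := fun w => by
          apply Subtype.ext
          funext i
          by_cases h : i.1 < n + 1
          · exact (dif_pos h).trans (congrArg w.1 (Fin.ext rfl))
          · exact (dif_neg h).trans (congrArg w.1 (Fin.ext (by have := i.2; simp; omega)))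
        right_inv := fun q => by
          rcases q with ⟨⟨w', hw'⟩, ⟨x, hx⟩⟩
          have h1 : (fun i : Fin (n+1) =>
              if h : i.1 < n + 1 then w' ⟨i.1, h⟩ else x) = w' := by
            funext i
            simp only [dif_pos i.2]
          have hv : (if h : n < n + 1 then w' ⟨n, h⟩ else x) = w' ⟨n, Nat.lt_succ_self n⟩ :=
            dif_pos (Nat.lt_succ_self n)
          refine Sigma.ext (Subtype.ext h1) ((Subtype.heq_iff_coe_eq ?_).mpr ?_)
          · intro y
            constructor
            · exact fun hy hc => hy (hc.trans hv.symm)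
            · exact fun hy hc => hy (hc.trans hv)
          · exact dif_neg (lt_irrefl (n + 1)) }
    rw [Fintype.card_congr e, Fintype.card_sigma]
    have hcard : ∀ w' : {w : Fin (n + 1) → Fin S // NoLoop S (n + 1) w},
        Fintype.card {x : Fin S // x ≠ w'.1 ⟨n, Nat.lt_succ_self n⟩} = S - 1 := by
      intro w'
      rw [Fintype.card_subtype_compl, Fintype.card_subtype_eq, Fintype.card_fin]
    rw [Finset.sum_congr rfl (fun w' _ => hcard w'), Finset.sum_const, Finset.card_univ, ih]
    simp [pow_succ, Nat.smul_one_eq_cast]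
    ring

section Words

variable {S T : ℕ}

/-- Total number of transitions equals `T - 1`. -/
theorem sum_trCount (hT : 1 ≤ T) (w : Fin T → Fin S) (hw : NoLoop S T w) :
    ∑ p : {p : Fin S × Fin S // p.1 ≠ p.2}, trCount S T w p.1 = T - 1 := by
  classical
  have h1 : ∀ p : Fin S × Fin S, trCount S T w p
      = ∑ t : Fin (T - 1), if (w ⟨t.1, by have := t.2; omega⟩ = p.1
        ∧ w ⟨t.1 + 1, by have := t.2; omega⟩ = p.2) then 1 else 0 := by
    intro p
    rw [trCount, Finset.card_filter]
  calc ∑ p : {p : Fin S × Fin S // p.1 ≠ p.2}, trCount S T w p.1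
      = ∑ p : {p : Fin S × Fin S // p.1 ≠ p.2}, ∑ t : Fin (T - 1),
          if (w ⟨t.1, by have := t.2; omega⟩ = p.1.1
            ∧ w ⟨t.1 + 1, by have := t.2; omega⟩ = p.1.2) then 1 else 0 := by
        exact Finset.sum_congr rfl fun p _ => h1 p.1
    _ = ∑ t : Fin (T - 1), ∑ p : {p : Fin S × Fin S // p.1 ≠ p.2},
          if (w ⟨t.1, by have := t.2; omega⟩ = p.1.1
            ∧ w ⟨t.1 + 1, by have := t.2; omega⟩ = p.1.2) then 1 else 0 :=
        Finset.sum_comm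
    _ = ∑ _t : Fin (T - 1), 1 := by
        refine Finset.sum_congr rfl fun t _ => ?_
        rw [Finset.sum_eq_single
          (⟨(w ⟨t.1, by have := t.2; omega⟩, w ⟨t.1 + 1, by have := t.2; omega⟩), hw t⟩ :
            {p : Fin S × Fin S // p.1 ≠ p.2})
          (fun q _ hne => if_neg (fun hc => hne (Subtype.ext (Prod.ext hc.1.symm hc.2.symm))))
          (fun habs => absurd (Finset.mem_univ _) habs)]
        exact if_pos ⟨rfl, rfl⟩
    _ = T - 1 := by simp

/-- Words agreeing except at the last position. -/
theorem trCount_diff_last (hT : 2 ≤ T) (w1 w2 : Fin T → Fin S)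
    (hsame : ∀ t : Fin T, t.1 ≠ T - 1 → w1 t = w2 t) (p : Fin S × Fin S) :
    (trCount S T w1 p : ℤ) - trCount S T w2 p
      = (if (w1 ⟨T - 2, by omega⟩ = p.1 ∧ w1 ⟨T - 2 + 1, by omega⟩ = p.2) then 1 else 0)
        - (if (w2 ⟨T - 2, by omega⟩ = p.1 ∧ w2 ⟨T - 2 + 1, by omega⟩ = p.2) then 1 else 0) := by
  classical
  have key : ∀ w : Fin T → Fin S, (trCount S T w p : ℤ)
      = (∑ t ∈ Finset.univ.erase (⟨T - 2, by omega⟩ : Fin (T - 1)),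
          if (w ⟨t.1, by have := t.2; omega⟩ = p.1
            ∧ w ⟨t.1 + 1, by have := t.2; omega⟩ = p.2) then (1 : ℤ) else 0)
        + (if (w ⟨T - 2, by omega⟩ = p.1 ∧ w ⟨T - 2 + 1, by omega⟩ = p.2) then 1 else 0) := by
    intro w
    have h1 : (trCount S T w p : ℤ)
        = ∑ t : Fin (T - 1), if (w ⟨t.1, by have := t.2; omega⟩ = p.1
          ∧ w ⟨t.1 + 1, by have := t.2; omega⟩ = p.2) then (1 : ℤ) else 0 := by
      rw [trCount, Finset.card_filter]
      push_cast
      rfl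
    rw [h1, ← Finset.sum_erase_add _ _ (Finset.mem_univ (⟨T - 2, by omega⟩ : Fin (T - 1)))]
  rw [key w1, key w2]
  have herase : ∀ t ∈ Finset.univ.erase (⟨T - 2, by omega⟩ : Fin (T - 1)),
      (if (w1 ⟨t.1, by have := t.2; omega⟩ = p.1
        ∧ w1 ⟨t.1 + 1, by have := t.2; omega⟩ = p.2) then (1 : ℤ) else 0)
      = (if (w2 ⟨t.1, by have := t.2; omega⟩ = p.1
        ∧ w2 ⟨t.1 + 1, by have := t.2; omega⟩ = p.2) then (1 : ℤ) else 0) := by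
    intro t ht
    have ht' : t.1 ≠ T - 2 := by
      intro hc
      exact (Finset.mem_erase.mp ht).1 (Fin.ext hc)
    have e1 : w1 ⟨t.1, by have := t.2; omega⟩ = w2 ⟨t.1, by have := t.2; omega⟩ :=
      hsame _ (by have := t.2; simp; omega)
    have e2 : w1 ⟨t.1 + 1, by have := t.2; omega⟩ = w2 ⟨t.1 + 1, by have := t.2; omega⟩ :=
      hsame _ (by have := t.2; simp; omega)
    rw [e1, e2]
  rw [Finset.sum_congr rfl herase]
  ring

/-- Words agreeing except at the first position. -/
theorem trCount_diff_first (hT : 2 ≤ T) (w1 w2 : Fin T → Fin S)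
    (hsame : ∀ t : Fin T, t.1 ≠ 0 → w1 t = w2 t) (p : Fin S × Fin S) :
    (trCount S T w1 p : ℤ) - trCount S T w2 p
      = (if (w1 ⟨0, by omega⟩ = p.1 ∧ w1 ⟨1, by omega⟩ = p.2) then 1 else 0)
        - (if (w2 ⟨0, by omega⟩ = p.1 ∧ w2 ⟨1, by omega⟩ = p.2) then 1 else 0) := by
  classical
  have key : ∀ w : Fin T → Fin S, (trCount S T w p : ℤ)
      = (∑ t ∈ Finset.univ.erase (⟨0, by omega⟩ : Fin (T - 1)),
          if (w ⟨t.1, by have := t.2; omega⟩ = p.1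
            ∧ w ⟨t.1 + 1, by have := t.2; omega⟩ = p.2) then (1 : ℤ) else 0)
        + (if (w ⟨0, by omega⟩ = p.1 ∧ w ⟨1, by omega⟩ = p.2) then 1 else 0) := by
    intro w
    have h1 : (trCount S T w p : ℤ)
        = ∑ t : Fin (T - 1), if (w ⟨t.1, by have := t.2; omega⟩ = p.1
          ∧ w ⟨t.1 + 1, by have := t.2; omega⟩ = p.2) then (1 : ℤ) else 0 := by
      rw [trCount, Finset.card_filter]
      push_cast
      rfl
    rw [h1, ← Finset.sum_erase_add _ _ (Finset.mem_univ (⟨0, by omega⟩ : Fin (T - 1)))]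
  have herase : ∀ t ∈ Finset.univ.erase (⟨0, by omega⟩ : Fin (T - 1)),
      (if (w1 ⟨t.1, by have := t.2; omega⟩ = p.1
        ∧ w1 ⟨t.1 + 1, by have := t.2; omega⟩ = p.2) then (1 : ℤ) else 0)
      = (if (w2 ⟨t.1, by have := t.2; omega⟩ = p.1
        ∧ w2 ⟨t.1 + 1, by have := t.2; omega⟩ = p.2) then (1 : ℤ) else 0) := by
    intro t ht
    have ht' : t.1 ≠ 0 := by
      intro hc
      exact (Finset.mem_erase.mp ht).1 (Fin.ext hc)
    have e1 : w1 ⟨t.1, by have := t.2; omega⟩ = w2 ⟨t.1, by have := t.2; omega⟩ :=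
      hsame _ (by simpa using ht')
    have e2 : w1 ⟨t.1 + 1, by have := t.2; omega⟩ = w2 ⟨t.1 + 1, by have := t.2; omega⟩ :=
      hsame _ (by simp)
    rw [e1, e2]
  rw [key w1, key w2, Finset.sum_congr rfl herase]
  ring

end Words

section Concrete

variable {S T : ℕ}

/-- Two letters distinct from `i` (and from each other). -/
def wa (hS : 3 ≤ S) (i : Fin S) : Fin S := if i.1 = 0 then ⟨1, by omega⟩ else ⟨0, by omega⟩
def wb (hS : 3 ≤ S) (i : Fin S) : Fin S := if i.1 ≤ 1 then ⟨2, by omega⟩ else ⟨1, by omega⟩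

theorem wa_ne (hS : 3 ≤ S) (i : Fin S) : wa hS i ≠ i := by
  unfold wa; split_ifs with h <;> (intro hc; apply_fun Fin.val at hc; simp at hc; omega)

theorem wb_ne (hS : 3 ≤ S) (i : Fin S) : wb hS i ≠ i := by
  unfold wb; split_ifs with h <;> (intro hc; apply_fun Fin.val at hc; simp at hc; omega)

theorem wa_ne_wb (hS : 3 ≤ S) (i : Fin S) : wa hS i ≠ wb hS i := by
  unfold wa wb; split_ifs with h h' h'' <;>
    (intro hc; apply_fun Fin.val at hc; simp at hc <;> omega)

/-- Word ending with `… a b a b i j` pattern reversed: pattern then `i j`. -/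
def wordA (hS : 3 ≤ S) (T : ℕ) (i j : Fin S) : Fin T → Fin S := fun t =>
  if t.1 = T - 1 then j else if t.1 = T - 2 then i
  else if t.1 % 2 = 0 then wa hS i else wb hS i

/-- Word starting with `j i` then a pattern avoiding `i`. -/
def wordB (hS : 3 ≤ S) (T : ℕ) (i j : Fin S) : Fin T → Fin S := fun t =>
  if t.1 = 0 then j else if t.1 = 1 then i
  else if t.1 % 2 = 0 then wa hS i else wb hS i

def word0 (hS : 3 ≤ S) (T : ℕ) : Fin T → Fin S := fun t =>
  if t.1 % 2 = 0 then ⟨0, by omega⟩ else ⟨1, by omega⟩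

theorem word0_noLoop (hS : 3 ≤ S) : NoLoop S T (word0 hS T) := by
  intro t
  have ht := t.2
  unfold word0
  beta_reduce
  simp only [Fin.val_mk]
  split_ifs <;> first
    | omega
    | exact fun hc => by simpa using congrArg Fin.val hc

theorem wordA_noLoop (hS : 3 ≤ S) (hT : 4 ≤ T) (i j : Fin S) (hij : j ≠ i) :
    NoLoop S T (wordA hS T i j) := by
  intro t
  have ht := t.2
  unfold wordA
  beta_reduce
  simp only [Fin.val_mk]
  split_ifs <;> first
    | omega
    | exact fun hc => hij hc.symm
    | exact hij
    | exact wa_ne hS i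
    | exact wb_ne hS i
    | exact wa_ne_wb hS i
    | exact fun hc => wa_ne_wb hS i hc.symm
    | exact fun hc => wa_ne hS i hc.symm
    | exact fun hc => wb_ne hS i hc.symm
    | (exfalso; assumption)

theorem wordB_noLoop (hS : 3 ≤ S) (hT : 4 ≤ T) (i j : Fin S) (hij : j ≠ i) :
    NoLoop S T (wordB hS T i j) := by
  intro t
  have ht := t.2
  unfold wordB
  beta_reduce
  simp only [Fin.val_mk]
  split_ifs <;> first
    | omega
    | exact fun hc => hij hc.symm
    | exact hij
    | exact wa_ne hS i
    | exact wb_ne hS i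
    | exact wa_ne_wb hS i
    | exact fun hc => wa_ne_wb hS i hc.symm
    | exact fun hc => wa_ne hS i hc.symm
    | exact fun hc => wb_ne hS i hc.symm
    | (exfalso; assumption)

/-- The key transition-count difference for the `wordA` family. -/
theorem wordA_diff (hS : 3 ≤ S) (hT : 4 ≤ T) (i j k : Fin S) (p : Fin S × Fin S) :
    (trCount S T (wordA hS T i j) p : ℤ) - trCount S T (wordA hS T i k) p
      = (if p = (i, j) then 1 else 0) - (if p = (i, k) then 1 else 0) := by
  have hsame : ∀ t : Fin T, t.1 ≠ T - 1 → wordA hS T i j t = wordA hS T i k t := by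
    intro t ht
    unfold wordA
    rw [if_neg ht, if_neg ht]
  rw [trCount_diff_last (by omega) _ _ hsame p]
  have e1 : ∀ l : Fin S, wordA hS T i l ⟨T - 2, by omega⟩ = i := by
    intro l
    unfold wordA
    rw [if_neg (by simp; omega), if_pos (by simp)]
  have e2 : ∀ l : Fin S, wordA hS T i l ⟨T - 2 + 1, by omega⟩ = l := by
    intro l
    unfold wordA
    rw [if_pos (by simp; omega)]
  rw [e1 j, e2 j, e1 k, e2 k]
  have hcond : ∀ x y : Fin S, (x = p.1 ∧ y = p.2) ↔ (p = (x, y)) := by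
    intro x y
    rw [Prod.ext_iff]
    exact ⟨fun h => ⟨h.1.symm, h.2.symm⟩, fun h => ⟨h.1.symm, h.2.symm⟩⟩
  rw [if_congr (hcond i j) rfl rfl, if_congr (hcond i k) rfl rfl]

/-- The key transition-count difference for the `wordB` family. -/
theorem wordB_diff (hS : 3 ≤ S) (hT : 4 ≤ T) (i j k : Fin S) (p : Fin S × Fin S) :
    (trCount S T (wordB hS T i j) p : ℤ) - trCount S T (wordB hS T i k) p
      = (if p = (j, i) then 1 else 0) - (if p = (k, i) then 1 else 0) := by
  have hsame : ∀ t : Fin T, t.1 ≠ 0 → wordB hS T i j t = wordB hS T i k t := by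
    intro t ht
    unfold wordB
    rw [if_neg ht, if_neg ht]
  rw [trCount_diff_first (by omega) _ _ hsame p]
  have e1 : ∀ l : Fin S, wordB hS T i l ⟨0, by omega⟩ = l := by
    intro l
    unfold wordB
    rw [if_pos rfl]
  have e2 : ∀ l : Fin S, wordB hS T i l ⟨1, by omega⟩ = i := by
    intro l
    unfold wordB
    rw [if_neg (by simp), if_pos rfl]
  rw [e1 j, e2 j, e1 k, e2 k]
  have hcond : ∀ x y : Fin S, (x = p.1 ∧ y = p.2) ↔ (p = (x, y)) := by
    intro x y
    rw [Prod.ext_iff]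
    exact ⟨fun h => ⟨h.1.symm, h.2.symm⟩, fun h => ⟨h.1.symm, h.2.symm⟩⟩
  rw [if_congr (hcond j i) rfl rfl, if_congr (hcond k i) rfl rfl]

end Concrete



theorem stmt6 (S T : ℕ) (hS : 3 ≤ S) (hT : 4 ≤ T) :
    ∃ (r : Fin (S * (S - 1)) ≃ {p : Fin S × Fin S // p.1 ≠ p.2})
      (c : Fin (S * (S - 1) ^ (T - 1)) ≃ {w : Fin T → Fin S // NoLoop S T w})
      (U : Matrix (Fin (S * (S - 1))) (Fin (S * (S - 1))) ℤ)
      (V : Matrix (Fin (S * (S - 1) ^ (T - 1))) (Fin (S * (S - 1) ^ (T - 1))) ℤ),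
      IsUnit U.det ∧ IsUnit V.det ∧
      U * (Matrix.of fun (i : Fin (S * (S - 1))) (j : Fin (S * (S - 1) ^ (T - 1))) =>
          (trCount S T (c j).1 (r i).1 : ℤ)) * V =
        Matrix.of fun (i : Fin (S * (S - 1))) (j : Fin (S * (S - 1) ^ (T - 1))) =>
          if (i : ℕ) = (j : ℕ) then
            (if (i : ℕ) = S * (S - 1) - 1 then (T : ℤ) - 1 else 1)
          else 0 := by
  classical
  have hm6 : 6 ≤ S * (S - 1) := by
    have : 3 * 2 ≤ S * (S - 1) := Nat.mul_le_mul hS (by omega)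
    omega
  have hmN : S * (S - 1) ≤ S * (S - 1) ^ (T - 1) := by
    have h1 : (S - 1) ≤ (S - 1) ^ (T - 1) := Nat.le_self_pow (by omega) _
    exact Nat.mul_le_mul_left S h1
  set m : ℕ := S * (S - 1) with hm
  set Nn : ℕ := S * (S - 1) ^ (T - 1) with hNn
  -- the index equivalences
  have hcP : Fintype.card {p : Fin S × Fin S // p.1 ≠ p.2} = m := card_pairs S (by omega)
  have hcW : Fintype.card {w : Fin T → Fin S // NoLoop S T w} = Nn := by
    have h := card_words S (by omega) (T - 1)
    have hT1 : T - 1 + 1 = T := by omega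
    rw [hT1] at h
    exact h
  set r : Fin m ≃ {p : Fin S × Fin S // p.1 ≠ p.2} := (Fintype.equivFinOfCardEq hcP).symm
    with hr
  set c : Fin Nn ≃ {w : Fin T → Fin S // NoLoop S T w} := (Fintype.equivFinOfCardEq hcW).symm
    with hc
  set M : Matrix (Fin m) (Fin Nn) ℤ :=
    Matrix.of fun i j => (trCount S T (c j).1 (r i).1 : ℤ) with hM
  set U : Matrix (Fin m) (Fin m) ℤ :=
    Matrix.of fun i j => if i.1 = m - 1 then 1 else if i = j then 1 else 0 with hU
  set D : Matrix (Fin m) (Fin Nn) ℤ :=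
    Matrix.of fun i j =>
      if (i : ℕ) = (j : ℕ) then (if (i : ℕ) = m - 1 then (T : ℤ) - 1 else 1) else 0 with hD
  set B : Matrix (Fin m) (Fin Nn) ℤ := U * M with hB
  -- U is unimodular
  have hUdet : IsUnit U.det := by
    have htri : Matrix.BlockTriangular U OrderDual.toDual := by
      intro i j hij
      show (if i.1 = m - 1 then 1 else if i = j then 1 else 0) = 0
      have hij' : (i : ℕ) < (j : ℕ) := hij
      have := j.2
      rw [if_neg (by omega), if_neg (by intro h; rw [h] at hij'; exact lt_irrefl _ hij')]
    rw [Matrix.det_of_lowerTriangular U htri]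
    have hdiag : ∀ i : Fin m, U i i = 1 := by
      intro i
      show (if i.1 = m - 1 then 1 else if i = i then 1 else 0) = (1 : ℤ)
      split_ifs <;> simp_all
    rw [Finset.prod_congr rfl (fun i _ => hdiag i)]
    simp
  -- column sums
  have hsum : ∀ (w : Fin T → Fin S), NoLoop S T w →
      (∑ k : Fin m, (trCount S T w (r k).1 : ℤ)) = (T : ℤ) - 1 := by
    intro w hw
    have h1 : ∑ k : Fin m, (trCount S T w (r k).1 : ℤ)
        = ∑ p : {p : Fin S × Fin S // p.1 ≠ p.2}, (trCount S T w p.1 : ℤ) :=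
      Equiv.sum_comp r (fun p => (trCount S T w p.1 : ℤ))
    rw [h1, ← Nat.cast_sum, sum_trCount (by omega) w hw]
    push_cast [Nat.cast_sub (by omega : 1 ≤ T)]
    ring
  -- entries of B
  have hBent : ∀ i j, B i j = if i.1 = m - 1 then (T : ℤ) - 1
      else (trCount S T (c j).1 (r i).1 : ℤ) := by
    intro i j
    rw [hB, Matrix.mul_apply]
    by_cases hi : i.1 = m - 1
    · rw [if_pos hi]
      have hUik : ∀ k, U i k = 1 := fun k => if_pos hi
      calc ∑ k, U i k * M k j = ∑ k : Fin m, (trCount S T (c j).1 (r k).1 : ℤ) := by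
            refine Finset.sum_congr rfl fun k _ => ?_
            rw [hUik k, one_mul]
            rfl
        _ = (T : ℤ) - 1 := hsum (c j).1 (c j).2
    · rw [if_neg hi]
      have hUik : ∀ k, U i k = if i = k then 1 else 0 := fun k => if_neg hi
      calc ∑ k, U i k * M k j = ∑ k, if i = k then M k j else 0 := by
            refine Finset.sum_congr rfl fun k _ => ?_
            rw [hUik k, ite_mul, one_mul, zero_mul]
        _ = M i j := by rw [Finset.sum_ite_eq]; simp
        _ = (trCount S T (c j).1 (r i).1 : ℤ) := rfl
  -- columns of B are in the range of B
  set RB : Submodule ℤ (Fin m → ℤ) := LinearMap.range B.mulVecLin with hRB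
  have hcolB : ∀ j : Fin Nn, (fun i => B i j) ∈ RB := by
    intro j
    rw [hRB, Matrix.range_mulVecLin]
    exact Submodule.subset_span ⟨j, rfl⟩
  have hcol : ∀ (w : Fin T → Fin S) (hw : NoLoop S T w),
      (fun i : Fin m => if i.1 = m - 1 then (T : ℤ) - 1
        else (trCount S T w (r i).1 : ℤ)) ∈ RB := by
    intro w hw
    have h1 := hcolB (c.symm ⟨w, hw⟩)
    have heq : (fun i => B i (c.symm ⟨w, hw⟩))
        = (fun i : Fin m => if i.1 = m - 1 then (T : ℤ) - 1
            else (trCount S T w (r i).1 : ℤ)) := by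
      funext i
      rw [hBent i (c.symm ⟨w, hw⟩), Equiv.apply_symm_apply]
    rw [← heq]
    exact h1
  -- single-difference vectors
  have hstep : ∀ (w1 w2 : Fin T → Fin S), NoLoop S T w1 → NoLoop S T w2 →
      ∀ (p q : Fin S × Fin S),
      (∀ pr, (trCount S T w1 pr : ℤ) - trCount S T w2 pr
        = (if pr = p then 1 else 0) - (if pr = q then 1 else 0)) →
      (fun i : Fin m => if i.1 = m - 1 then 0
        else ((if (r i).1 = p then (1 : ℤ) else 0) - (if (r i).1 = q then 1 else 0))) ∈ RB := by
    intro w1 w2 hw1 hw2 p q hdiff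
    have heq : (fun i : Fin m => if i.1 = m - 1 then 0
        else ((if (r i).1 = p then (1 : ℤ) else 0) - (if (r i).1 = q then 1 else 0)))
      = (fun i : Fin m => if i.1 = m - 1 then (T : ℤ) - 1
            else (trCount S T w1 (r i).1 : ℤ))
        - (fun i : Fin m => if i.1 = m - 1 then (T : ℤ) - 1
            else (trCount S T w2 (r i).1 : ℤ)) := by
      funext i
      rw [Pi.sub_apply]
      by_cases hi : i.1 = m - 1
      · rw [if_pos hi, if_pos hi, if_pos hi]
        ring
      · rw [if_neg hi, if_neg hi, if_neg hi, hdiff (r i).1]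
    rw [heq]
    exact Submodule.sub_mem RB (hcol w1 hw1) (hcol w2 hw2)
  have hstepA : ∀ i j k : Fin S, j ≠ i → k ≠ i →
      (fun i' : Fin m => if i'.1 = m - 1 then 0
        else ((if (r i').1 = (i, j) then (1 : ℤ) else 0)
          - (if (r i').1 = (i, k) then 1 else 0))) ∈ RB :=
    fun i j k hj hk => hstep (wordA hS T i j) (wordA hS T i k)
      (wordA_noLoop hS hT i j hj) (wordA_noLoop hS hT i k hk) (i, j) (i, k)
      (wordA_diff hS hT i j k)
  have hstepB : ∀ i j k : Fin S, j ≠ i → k ≠ i →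
      (fun i' : Fin m => if i'.1 = m - 1 then 0
        else ((if (r i').1 = (j, i) then (1 : ℤ) else 0)
          - (if (r i').1 = (k, i) then 1 else 0))) ∈ RB :=
    fun i j k hj hk => hstep (wordB hS T i j) (wordB hS T i k)
      (wordB_noLoop hS hT i j hj) (wordB_noLoop hS hT i k hk) (j, i) (k, i)
      (wordB_diff hS hT i j k)
  -- general difference vectors
  have hDvec : ∀ p q : Fin S × Fin S, p.1 ≠ p.2 → q.1 ≠ q.2 →
      (fun i' : Fin m => if i'.1 = m - 1 then 0
        else ((if (r i').1 = p then (1 : ℤ) else 0)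
          - (if (r i').1 = q then 1 else 0))) ∈ RB := by
    intro p q hp hq
    -- pick a third letter distinct from p.1 and q.1
    obtain ⟨x, hx⟩ : ∃ x : Fin S, x ≠ p.1 ∧ x ≠ q.1 := by
      by_contra hcon
      push_neg at hcon
      have hsub : (Finset.univ : Finset (Fin S)) ⊆ {p.1, q.1} := by
        intro x _
        by_cases h1 : x = p.1
        · simp [h1]
        · simp [hcon x h1]
      have hcard := Finset.card_le_card hsub
      have h2 : ({p.1, q.1} : Finset (Fin S)).card ≤ 2 := by
        apply le_trans (Finset.card_insert_le _ _)
        simp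
      simp only [Finset.card_univ, Fintype.card_fin] at hcard
      omega
    have key : (fun i' : Fin m => if i'.1 = m - 1 then 0
        else ((if (r i').1 = p then (1 : ℤ) else 0) - (if (r i').1 = q then 1 else 0)))
      = (fun i' : Fin m => if i'.1 = m - 1 then 0
          else ((if (r i').1 = (p.1, p.2) then (1 : ℤ) else 0)
            - (if (r i').1 = (p.1, x) then 1 else 0)))
        + (fun i' : Fin m => if i'.1 = m - 1 then 0
          else ((if (r i').1 = (p.1, x) then (1 : ℤ) else 0)
            - (if (r i').1 = (q.1, x) then 1 else 0)))
        + (fun i' : Fin m => if i'.1 = m - 1 then 0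
          else ((if (r i').1 = (q.1, x) then (1 : ℤ) else 0)
            - (if (r i').1 = (q.1, q.2) then 1 else 0))) := by
      funext i'
      simp only [Pi.add_apply]
      by_cases hi : i'.1 = m - 1
      · rw [if_pos hi, if_pos hi, if_pos hi, if_pos hi]
        ring
      · rw [if_neg hi, if_neg hi, if_neg hi, if_neg hi]
        rw [show ((p.1, p.2) : Fin S × Fin S) = p from rfl,
          show ((q.1, q.2) : Fin S × Fin S) = q from rfl]
        ring
    rw [key]
    refine Submodule.add_mem RB (Submodule.add_mem RB ?_ ?_) ?_
    · exact hstepA p.1 p.2 x (Ne.symm hp) hx.1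
    · exact hstepB x p.1 q.1 hx.1.symm hx.2.symm
    · exact hstepA q.1 x q.2 (hx.2) (Ne.symm hq)
  
  have hmlt : m - 1 < m := by omega
  -- standard basis vectors (except the last) are in RB
  have hE : ∀ i : Fin m, i.1 ≠ m - 1 →
      (fun i' : Fin m => if i'.1 = i.1 then (1 : ℤ) else 0) ∈ RB := by
    intro i hi
    have hmem := hDvec (r i).1 (r ⟨m - 1, hmlt⟩).1 (r i).2 (r ⟨m - 1, hmlt⟩).2
    have heq : (fun i' : Fin m => if i'.1 = i.1 then (1 : ℤ) else 0)
        = (fun i' : Fin m => if i'.1 = m - 1 then 0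
          else ((if (r i').1 = (r i).1 then (1 : ℤ) else 0)
            - (if (r i').1 = (r ⟨m - 1, hmlt⟩).1 then 1 else 0))) := by
      funext i'
      by_cases hi' : i'.1 = m - 1
      · rw [if_pos hi', if_neg (by rw [hi']; exact fun h => hi h.symm)]
      · rw [if_neg hi']
        have h1 : ((r i').1 = (r i).1) ↔ (i' = i) :=
          ⟨fun h => r.injective (Subtype.ext h), fun h => by rw [h]⟩
        have h2 : ((r i').1 = (r ⟨m - 1, hmlt⟩).1) ↔ (i' = ⟨m - 1, hmlt⟩) :=
          ⟨fun h => r.injective (Subtype.ext h), fun h => by rw [h]⟩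
        rw [if_congr h1 rfl rfl, if_congr h2 rfl rfl,
          if_neg (show ¬ i' = (⟨m - 1, hmlt⟩ : Fin m) from fun h => hi' (by rw [h])), sub_zero]
        exact if_congr ⟨fun h => Fin.ext h, fun h => congrArg Fin.val h⟩ rfl rfl
    rw [heq]
    exact hmem
  -- the two ranges coincide
  have hrange : LinearMap.range B.mulVecLin = LinearMap.range D.mulVecLin := by
    rw [← hRB]
    apply le_antisymm
    · rw [hRB, Matrix.range_mulVecLin]
      apply Submodule.span_le.mpr
      rintro _ ⟨j, rfl⟩
      refine ⟨(fun k => if hk : (k : ℕ) < m then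
        (if (k : ℕ) = m - 1 then 1 else B ⟨k.1, hk⟩ j) else 0), ?_⟩
      funext i
      rw [Matrix.mulVecLin_apply]
      show ∑ k, D i k * _ = _
      rw [Finset.sum_eq_single (⟨i.1, lt_of_lt_of_le i.2 hmN⟩ : Fin Nn)]
      · have hDik : D i (⟨i.1, lt_of_lt_of_le i.2 hmN⟩ : Fin Nn)
            = (if i.1 = m - 1 then (T : ℤ) - 1 else 1) := if_pos rfl
        rw [hDik, dif_pos i.2]
        by_cases hi : i.1 = m - 1
        · rw [if_pos hi, if_pos hi]
          show _ = Bᵀ j i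
          rw [Matrix.transpose_apply, hBent i j, if_pos hi, mul_one]
        · rw [if_neg hi, if_neg hi, one_mul]
          show B ⟨i.1, i.2⟩ j = Bᵀ j i
          rw [Matrix.transpose_apply]
      · intro k _ hk
        have hik : ¬ (i : ℕ) = (k : ℕ) := by
          intro h
          exact hk (Fin.ext h.symm)
        rw [show D i k = 0 from if_neg hik, zero_mul]
      · intro h
        exact absurd (Finset.mem_univ _) h
    · rw [Matrix.range_mulVecLin]
      apply Submodule.span_le.mpr
      rintro _ ⟨j, rfl⟩
      have hDT : Dᵀ j = fun i : Fin m =>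
          (if (i : ℕ) = (j : ℕ) then (if (i : ℕ) = m - 1 then (T : ℤ) - 1 else 1) else 0) := by
        funext i
        rfl
      rw [show D.col j = Dᵀ j from rfl, hDT]
      by_cases hj : (j : ℕ) < m
      · by_cases hjm : (j : ℕ) = m - 1
        · -- the column (T-1)·e_last
          have heq : (fun i : Fin m =>
                (if (i : ℕ) = (j : ℕ) then (if (i : ℕ) = m - 1 then (T : ℤ) - 1 else 1) else 0))
              = (fun i : Fin m => if i.1 = m - 1 then (T : ℤ) - 1
                  else (trCount S T (word0 hS T) (r i).1 : ℤ))
                - ∑ i' ∈ Finset.univ.filter (fun i' : Fin m => i'.1 ≠ m - 1),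
                    (trCount S T (word0 hS T) (r i').1 : ℤ) •
                      (fun k : Fin m => if k.1 = i'.1 then (1 : ℤ) else 0) := by
            funext i
            rw [Pi.sub_apply, Finset.sum_apply]
            have hterm : ∀ i' : Fin m,
                ((trCount S T (word0 hS T) (r i').1 : ℤ) •
                  (fun k : Fin m => if k.1 = i'.1 then (1 : ℤ) else 0)) i
                = (trCount S T (word0 hS T) (r i').1 : ℤ) *
                    (if i.1 = i'.1 then (1 : ℤ) else 0) := fun i' => rfl
            rw [Finset.sum_congr rfl (fun i' _ => hterm i')]
            by_cases hi : i.1 = m - 1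
            · rw [if_pos (by omega : (i : ℕ) = (j : ℕ)), if_pos hi, if_pos hi]
              rw [Finset.sum_eq_zero, sub_zero]
              intro i' hi'
              have : i'.1 ≠ m - 1 := (Finset.mem_filter.mp hi').2
              rw [if_neg (by omega), mul_zero]
            · rw [if_neg (by omega : ¬ (i : ℕ) = (j : ℕ)), if_neg hi]
              rw [Finset.sum_eq_single_of_mem i
                (Finset.mem_filter.mpr ⟨Finset.mem_univ i, hi⟩)]
              · rw [if_pos rfl, mul_one]
                ring
              · intro k _ hk
                rw [if_neg (fun h => hk (Fin.ext h.symm)), mul_zero]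
          rw [heq]
          refine Submodule.sub_mem RB (hcol _ (word0_noLoop hS)) ?_
          refine Submodule.sum_mem RB fun i' hi' => ?_
          exact Submodule.smul_mem RB _ (hE i' (Finset.mem_filter.mp hi').2)
        · -- a basic column
          have heq : (fun i : Fin m =>
                (if (i : ℕ) = (j : ℕ) then (if (i : ℕ) = m - 1 then (T : ℤ) - 1 else 1) else 0))
              = (fun i : Fin m => if i.1 = (⟨(j : ℕ), hj⟩ : Fin m).1 then (1 : ℤ) else 0) := by
            funext i
            by_cases hij : (i : ℕ) = (j : ℕ)
            · rw [if_pos hij, if_pos hij, if_neg (by omega)]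
            · rw [if_neg hij, if_neg hij]
          rw [heq]
          exact hE ⟨(j : ℕ), hj⟩ hjm
      · -- zero column
        have heq : (fun i : Fin m =>
              (if (i : ℕ) = (j : ℕ) then (if (i : ℕ) = m - 1 then (T : ℤ) - 1 else 1) else 0))
            = 0 := by
          funext i
          have := i.2
          rw [if_neg (by omega)]
          rfl
        rw [heq]
        exact Submodule.zero_mem RB
  obtain ⟨V, hVdet, hBV⟩ := colEquiv B D hrange
  refine ⟨r, c, U, V, hUdet, hVdet, ?_⟩
  show B * V = D
  exact hBV
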